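/- Let 1 < p < ∞ and 0 < β < p/(p−1). Fix N ∈ ℕ and j ∈ {1, …, N}, and define ρ_j : ℝ^N → L^p([0,∞), ℝ) by ρ_j(r) = 0 if r_j = 0, and ρ_j(r) = χ_j · r_j |r_j|^{−β} otherwise, where χ_j is the characteristic function of the interval [|r_{j−1}|^β, |r_{j−1}|^β + |r_j|^β] (with the convention r_0 = 0). Then ρ_j is a continuous map from ℝ^N to L^p([0,∞), ℝ). -/

import Mathlib

open MeasureTheory Set
open scoped ENNReal

noncomputable section

namespace Stmt0Aux

lemma Iic_fin (x : ℝ) : (volume.restrict (Set.Ici (0:ℝ))) (Set.Iic x) ≠ ∞ := by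
  rw [Measure.restrict_apply measurableSet_Iic, Set.inter_comm, Set.Ici_inter_Iic]
  simp [Real.volume_Icc]

def F (p x : ℝ) : Lp ℝ (ENNReal.ofReal p) (volume.restrict (Set.Ici (0:ℝ))) :=
  indicatorConstLp _ measurableSet_Iic (Iic_fin x) (1:ℝ)

lemma Ioc_fin (x y : ℝ) : (volume.restrict (Set.Ici (0:ℝ))) (Set.Ioc x y) ≠ ∞ := by
  rw [Measure.restrict_apply measurableSet_Ioc]
  exact ne_top_of_le_ne_top (by rw [Real.volume_Ioc]; exact ENNReal.ofReal_ne_top)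
    (measure_mono Set.inter_subset_left)

lemma F_sub (p : ℝ) {x y : ℝ} (hxy : x ≤ y) :
    F p y - F p x = indicatorConstLp _ measurableSet_Ioc (Ioc_fin x y) (1:ℝ) := by
  rw [sub_eq_iff_eq_add]
  apply Lp.ext
  filter_upwards [indicatorConstLp_coeFn (c := (1:ℝ)) (hs := measurableSet_Iic) (hμs := Iic_fin y) (p := ENNReal.ofReal p),
    Lp.coeFn_add (indicatorConstLp _ measurableSet_Ioc (Ioc_fin x y) (1:ℝ)) (F p x),
    indicatorConstLp_coeFn (c := (1:ℝ)) (hs := measurableSet_Ioc) (hμs := Ioc_fin x y) (p := ENNReal.ofReal p),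
    indicatorConstLp_coeFn (c := (1:ℝ)) (hs := measurableSet_Iic) (hμs := Iic_fin x) (p := ENNReal.ofReal p)] with t h1 h2 h3 h4
  simp only [F] at h2 ⊢
  rw [h1, h2, Pi.add_apply, h3, h4]
  simp only [Set.indicator, Set.mem_Ioc, Set.mem_Iic]
  rcases le_or_gt t x with h5 | h5
  · rw [if_pos h5, if_pos (h5.trans hxy), if_neg (by simp [not_lt.2 h5])]; norm_num
  · rcases le_or_gt t y with h6 | h6
    · rw [if_pos h6, if_pos ⟨h5, h6⟩, if_neg (by linarith)]; norm_num
    · rw [if_neg (by linarith), if_neg (fun h => absurd h.2 (not_le.2 h6)),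
        if_neg (by linarith)]; norm_num

lemma norm_F_sub_le {p : ℝ} [Fact (1 ≤ ENNReal.ofReal p)] (hp : 1 < p) (x y : ℝ) :
    ‖F p y - F p x‖ ≤ |y - x| ^ (1/p) := by
  have hp0 : (0:ℝ) < p := by linarith
  have hq0 : ENNReal.ofReal p ≠ 0 := by
    simp only [ne_eq, ENNReal.ofReal_eq_zero, not_le]; exact hp0
  have hqt : ENNReal.ofReal p ≠ ∞ := ENNReal.ofReal_ne_top
  wlog hxy : x ≤ y generalizing x y
  · rw [norm_sub_rev, abs_sub_comm]; exact this y x (le_of_not_ge hxy)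
  rw [F_sub p hxy, norm_indicatorConstLp hq0 hqt, norm_one, one_mul,
    ENNReal.toReal_ofReal hp0.le]
  have h1 : (volume.restrict (Set.Ici (0:ℝ))) (Set.Ioc x y) ≤ ENNReal.ofReal |y - x| := by
    rw [Measure.restrict_apply measurableSet_Ioc]
    refine le_trans (measure_mono Set.inter_subset_left) ?_
    rw [Real.volume_Ioc]
    exact ENNReal.ofReal_le_ofReal (le_abs_self _)
  have h2 : ((volume.restrict (Set.Ici (0:ℝ))) (Set.Ioc x y)).toReal ≤ |y - x| := by
    refine le_trans (ENNReal.toReal_mono ENNReal.ofReal_ne_top h1) ?_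
    rw [ENNReal.toReal_ofReal (abs_nonneg _)]
  exact Real.rpow_le_rpow ENNReal.toReal_nonneg h2 (by positivity)

lemma continuous_F {p : ℝ} [Fact (1 ≤ ENNReal.ofReal p)] (hp : 1 < p) : Continuous (F p) := by
  rw [continuous_iff_continuousAt]
  intro x₀
  rw [ContinuousAt, tendsto_iff_norm_sub_tendsto_zero]
  refine squeeze_zero (fun x => norm_nonneg _) (fun x => norm_F_sub_le hp x₀ x) ?_
  have h1 : Filter.Tendsto (fun x : ℝ => |x - x₀|) (nhds x₀) (nhds 0) := by
    have := (continuous_abs.comp (continuous_id.sub (continuous_const (y := x₀)))).tendsto x₀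
    simpa [Function.comp_def, Pi.sub_apply, id_eq] using this
  have h2 := (Real.continuous_rpow_const (q := 1/p) (by positivity)).tendsto 0
  have h3 := h2.comp h1
  rwa [Function.comp_def, Real.zero_rpow (by positivity : (1:ℝ)/p ≠ 0)] at h3

end Stmt0Aux

open Stmt0Aux

/-- continuity of the maps `ρ_j` from Lemma `lemma:phi`.
For `r ∈ ℝ^N` (coordinates `r 0, …, r (N-1)`, with the paper's convention that the
coordinate preceding the first one is `0`), the map sending `r` to the element of
`L^p([0,∞),ℝ)` given by `0` if `r j = 0` and otherwise by
`χ_j · r_j |r_j|^{-β}`, where `χ_j` is the characteristic function of the interval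
`[|r_{j-1}|^β, |r_{j-1}|^β + |r_j|^β]`, is continuous. -/
theorem stmt0 (p β : ℝ) (hp : 1 < p) [Fact (1 ≤ ENNReal.ofReal p)]
    (hβ0 : 0 < β) (hβ : β < p / (p - 1))
    (N : ℕ) (j : Fin N) :
    ∃ ρ : EuclideanSpace ℝ (Fin N) →
        Lp ℝ (ENNReal.ofReal p) (volume.restrict (Set.Ici (0:ℝ))),
      Continuous ρ ∧
      ∀ r : EuclideanSpace ℝ (Fin N),
        (ρ r : ℝ → ℝ) =ᵐ[volume.restrict (Set.Ici (0:ℝ))]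
          (fun t : ℝ =>
            if r j = 0 then 0
            else
              Set.indicator
                (Set.Icc
                  ((if h : (j : ℕ) = 0 then (0:ℝ)
                    else |r ⟨(j : ℕ) - 1, lt_of_le_of_lt (Nat.sub_le _ _) j.isLt⟩|) ^ β)
                  ((if h : (j : ℕ) = 0 then (0:ℝ)
                    else |r ⟨(j : ℕ) - 1, lt_of_le_of_lt (Nat.sub_le _ _) j.isLt⟩|) ^ β
                    + |r j| ^ β))
                (fun _ => r j * |r j| ^ (-β)) t) := by
  have hp0 : (0:ℝ) < p := by linarith
  set A : EuclideanSpace ℝ (Fin N) → ℝ := fun r =>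
    (if h : (j : ℕ) = 0 then (0:ℝ)
      else |r ⟨(j : ℕ) - 1, lt_of_le_of_lt (Nat.sub_le _ _) j.isLt⟩|) ^ β with hA_def
  set b : EuclideanSpace ℝ (Fin N) → ℝ := fun r => |r j| ^ β with hb_def
  set c : EuclideanSpace ℝ (Fin N) → ℝ := fun r => r j * |r j| ^ (-β) with hc_def
  have hb_nonneg : ∀ r, 0 ≤ b r := fun r => Real.rpow_nonneg (abs_nonneg _) _
  have hproj : Continuous fun r : EuclideanSpace ℝ (Fin N) => r j :=
    (EuclideanSpace.proj j).continuous
  have hA : Continuous A := by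
    by_cases h0 : (j : ℕ) = 0
    · simp only [hA_def, dif_pos h0]
      exact continuous_const
    · simp only [hA_def, dif_neg h0]
      exact (Real.continuous_rpow_const hβ0.le).comp
        (continuous_abs.comp (EuclideanSpace.proj _).continuous)
  have hb : Continuous b :=
    (Real.continuous_rpow_const hβ0.le).comp (continuous_abs.comp hproj)
  -- the map
  refine ⟨fun r => c r • (F p (A r + b r) - F p (A r)), ?_, ?_⟩
  · -- continuity
    rw [continuous_iff_continuousAt]
    intro r₀
    by_cases hr : r₀ j = 0
    · -- continuity at a zero of the j-th coordinate
      have hγ : 0 < 1 - β + β * (1/p) := by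
        have h1 : β * (p - 1) < p := (lt_div_iff₀ (by linarith)).1 hβ
        rw [show 1 - β + β * (1/p) = (p - β * (p-1))/p by field_simp; ring]
        exact div_pos (by linarith) hp0
      have hval : c r₀ • (F p (A r₀ + b r₀) - F p (A r₀)) = 0 := by
        have : c r₀ = 0 := by simp [hc_def, hr]
        rw [this, zero_smul]
      unfold ContinuousAt
      beta_reduce
      rw [hval, tendsto_zero_iff_norm_tendsto_zero]
      refine squeeze_zero (fun r => norm_nonneg _)
        (g := fun r => |r j| ^ (1 - β + β * (1/p))) (fun r => ?_) ?_
      · -- the bound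
        rw [norm_smul, Real.norm_eq_abs]
        by_cases hrj : r j = 0
        · have : c r = 0 := by simp [hc_def, hrj]
          rw [this, abs_zero, zero_mul]
          exact Real.rpow_nonneg (abs_nonneg _) _
        · have habs : (0:ℝ) < |r j| := abs_pos.2 hrj
          have hle : ‖F p (A r + b r) - F p (A r)‖ ≤ |r j| ^ (β * (1/p)) := by
            refine le_trans (norm_F_sub_le hp (A r) (A r + b r)) ?_
            rw [add_sub_cancel_left, abs_of_nonneg (hb_nonneg r), hb_def,
              ← Real.rpow_mul (abs_nonneg _)]
          have hceq : |c r| = |r j| * |r j| ^ (-β) := by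
            rw [hc_def]
            simp only
            rw [abs_mul, abs_of_nonneg (Real.rpow_nonneg (abs_nonneg _) _)]
          calc |c r| * ‖F p (A r + b r) - F p (A r)‖
              ≤ |c r| * (|r j| ^ (β * (1/p))) := by
                exact mul_le_mul_of_nonneg_left hle (abs_nonneg _)
            _ = |r j| ^ (1 - β + β * (1/p)) := by
                rw [hceq]
                rw [show (1:ℝ) - β + β * (1/p) = 1 + (-β) + β * (1/p) by ring,
                  Real.rpow_add habs, Real.rpow_add habs, Real.rpow_one]
      · -- bound tends to zero
        have h1 : Filter.Tendsto (fun r : EuclideanSpace ℝ (Fin N) => |r j|)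
            (nhds r₀) (nhds 0) := by
          have := (continuous_abs.comp hproj).tendsto r₀
          simpa [hr, Function.comp_def] using this
        have h2 := (Real.continuous_rpow_const (q := 1 - β + β * (1/p)) hγ.le).tendsto 0
        have h3 := h2.comp h1
        rwa [Function.comp_def, Real.zero_rpow hγ.ne'] at h3
    · -- continuity at a nonzero point
      have hc : ContinuousAt c r₀ := by
        have habs : ContinuousAt (fun r : EuclideanSpace ℝ (Fin N) => |r j|) r₀ :=
          (continuous_abs.comp hproj).continuousAt
        exact hproj.continuousAt.mul (habs.rpow_const (Or.inl (abs_ne_zero.2 hr)))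
      have hF : ContinuousAt (fun r => F p (A r + b r) - F p (A r)) r₀ :=
        (((continuous_F hp).comp (hA.add hb)).continuousAt).sub
          (((continuous_F hp).comp hA).continuousAt)
      exact hc.smul hF
  · -- a.e. identification
    intro r
    have hxy : A r ≤ A r + b r := le_add_of_nonneg_right (hb_nonneg r)
    have hsing : (volume.restrict (Set.Ici (0:ℝ))) {A r} = 0 := by
      rw [Measure.restrict_apply (measurableSet_singleton _)]
      exact measure_mono_null Set.inter_subset_left (Real.volume_singleton)
    have hae : ∀ᵐ t ∂(volume.restrict (Set.Ici (0:ℝ))), t ≠ A r := by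
      have := measure_eq_zero_iff_ae_notMem.1 hsing
      simpa using this
    have hA' : ∀ s : EuclideanSpace ℝ (Fin N),
        ((if h : (j : ℕ) = 0 then (0:ℝ)
          else |s ⟨(j : ℕ) - 1, lt_of_le_of_lt (Nat.sub_le _ _) j.isLt⟩|) ^ β) = A s :=
      fun _ => rfl
    have hb' : ∀ s : EuclideanSpace ℝ (Fin N), |s j| ^ β = b s := fun _ => rfl
    have hc' : ∀ s : EuclideanSpace ℝ (Fin N), s j * |s j| ^ (-β) = c s := fun _ => rfl
    simp only [hA', hb', hc']
    beta_reduce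
    rw [F_sub p hxy]
    filter_upwards [Lp.coeFn_smul (c r)
        (indicatorConstLp _ measurableSet_Ioc (Ioc_fin (A r) (A r + b r)) (1:ℝ)),
      indicatorConstLp_coeFn (c := (1:ℝ)) (hs := measurableSet_Ioc)
        (hμs := Ioc_fin (A r) (A r + b r)) (p := ENNReal.ofReal p), hae] with t h1 h2 hta
    rw [h1, Pi.smul_apply, h2]
    by_cases hrj : r j = 0
    · simp [hrj, hc_def, smul_eq_mul]
    · rw [if_neg hrj]
      simp only [smul_eq_mul]
      by_cases ht : t ∈ Set.Ioc (A r) (A r + b r)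
      · rw [Set.indicator_of_mem ht, Set.indicator_of_mem (Set.Ioc_subset_Icc_self ht),
          mul_one]
      · rw [Set.indicator_of_notMem ht, Set.indicator_of_notMem
          (fun h => ht ⟨lt_of_le_of_ne h.1 (Ne.symm hta), h.2⟩), mul_zero]
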